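/- Let i, j, k be distinct indices, s_i, s_j, s_k ∈ {0,1}, and μ_{ab} = m_a − m_b for complex constants m_a. Define β_{ab}(λ) = (-1)^{s_a}/(λ_{ab} − μ_{ab}) where λ_{ab} = λ_a − λ_b. Then (-1)^{s_k} β_{kj}(λ) β_{ik}(λ) + (-1)^{s_j} β_{ij}(λ) β_{jk}(λ) = (-1)^{s_i} β_{ik}(λ) β_{ij}(λ) wherever all terms are defined. -/

import Mathlib

set_option maxRecDepth 4000


lemma beta_key (x y z a b : ℂ) (hx : x*x = 1) (hy : y*y = 1) (hz : z*z = 1)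
    (ha : a ≠ 0) (hb : b ≠ 0) (hab : a + b ≠ 0) :
    z * (z / (-b)) * (x / (a + b)) + y * (x / a) * (y / b) = x * (x / (a + b)) * (x / a) := by
  field_simp
  linear_combination -x*a*hz + x*(a+b)*hy - x*b*hx

/-- For distinct indices `i, j, k`, parities `s_i, s_j, s_k`, and constants
`μ_{ab} = m_a − m_b`, the functions `β_{ab}(λ) = (-1)^{s_a}/(λ_{ab} − μ_{ab})` satisfy
`(-1)^{s_k} β_{kj} β_{ik} + (-1)^{s_j} β_{ij} β_{jk} = (-1)^{s_i} β_{ik} β_{ij}`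
wherever all terms are defined. -/
theorem beta_three_term_identity {N : ℕ} (i j k : Fin N)
    (hij : i ≠ j) (hjk : j ≠ k) (hik : i ≠ k)
    (si sj sk : ZMod 2) (m : Fin N → ℂ)
    (βij βjk βik βkj : (Fin N → ℂ) → ℂ)
    (hβij : ∀ l : Fin N → ℂ, βij l = ((-1 : ℂ)) ^ si.val / (l i - l j - (m i - m j)))
    (hβjk : ∀ l : Fin N → ℂ, βjk l = ((-1 : ℂ)) ^ sj.val / (l j - l k - (m j - m k)))
    (hβik : ∀ l : Fin N → ℂ, βik l = ((-1 : ℂ)) ^ si.val / (l i - l k - (m i - m k)))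
    (hβkj : ∀ l : Fin N → ℂ, βkj l = ((-1 : ℂ)) ^ sk.val / (l k - l j - (m k - m j))) :
    ∀ l : Fin N → ℂ,
      l i - l j - (m i - m j) ≠ 0 →
      l j - l k - (m j - m k) ≠ 0 →
      l i - l k - (m i - m k) ≠ 0 →
      l k - l j - (m k - m j) ≠ 0 →
      ((-1 : ℂ)) ^ sk.val * βkj l * βik l + ((-1 : ℂ)) ^ sj.val * βij l * βjk l
        = ((-1 : ℂ)) ^ si.val * βik l * βij l := by
  intro l h1 h2 h3 h4
  have e1 : ((-1 : ℂ)) ^ si.val * (-1 : ℂ) ^ si.val = 1 := by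
    rw [← pow_add]; exact Even.neg_one_pow ⟨si.val, rfl⟩
  have e2 : ((-1 : ℂ)) ^ sj.val * (-1 : ℂ) ^ sj.val = 1 := by
    rw [← pow_add]; exact Even.neg_one_pow ⟨sj.val, rfl⟩
  have e3 : ((-1 : ℂ)) ^ sk.val * (-1 : ℂ) ^ sk.val = 1 := by
    rw [← pow_add]; exact Even.neg_one_pow ⟨sk.val, rfl⟩
  rw [hβij, hβjk, hβik, hβkj]
  rw [show l k - l j - (m k - m j) = -(l j - l k - (m j - m k)) from by ring,
      show l i - l k - (m i - m k)
        = (l i - l j - (m i - m j)) + (l j - l k - (m j - m k)) from by ring]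
  exact beta_key _ _ _ _ _ e1 e2 e3 h1 h2 (fun h => h3 (by linear_combination h))
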